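/- Let d ≥ 1, let T ≥ 2 be an integer, let G, D > 0, let 𝒟 ⊆ ℝ^d be a convex set of diameter at most D, let f_1,…,f_T : ℝ^d → ℝ be convex differentiable functions, let x_t, x* ∈ 𝒟, set g_t = ∇f_t(x_t) with ‖g_t‖ ≤ G, and set A = 2 ln(√3((log₂ T)/2 + 3)) + 1 + ln T and V = G² Σ_{t=1}^T ‖x_t − x*‖². Let η_i = 2^{−i}/(5DG) for i = 0,…,⌈(log₂ T)/2⌉, and for each i let y_t^i ∈ 𝒟 (t = 1,…,T). If for every i both Σ_{t=1}^T s_t^{η_i}(x_t) − Σ_{t=1}^T s_t^{η_i}(y_t^i) ≤ 2 ln(√3((log₂ T)/2 + 3)) and Σ_{t=1}^T s_t^{η_i}(y_t^i) − Σ_{t=1}^T s_t^{η_i}(x*) ≤ 1 + ln T hold, then Σ_{t=1}^T f_t(x_t) − Σ_{t=1}^T f_t(x*) ≤ 3√(V·A) + 10GD·A. -/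

import Mathlib

set_option maxHeartbeats 1000000

open Real Finset

lemma grad_ineq {E : Type*} [NormedAddCommGroup E] [InnerProductSpace ℝ E] [CompleteSpace E]
    {f : E → ℝ} {g a b : E} (hconv : ConvexOn ℝ Set.univ f)
    (hgrad : HasGradientAt f g a) :
    f a - f b ≤ (inner ℝ (a - b) g : ℝ) := by
  set v := b - a with hv
  have hφconv : ConvexOn ℝ Set.univ (f ∘ (AffineMap.lineMap a b : ℝ →ᵃ[ℝ] E)) := by
    simpa using hconv.comp_affineMap (AffineMap.lineMap a b)
  have hc : HasDerivAt (fun τ : ℝ => AffineMap.lineMap a b τ) v 0 := by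
    simp only [AffineMap.lineMap_apply_module]
    have h1 : HasDerivAt (fun τ : ℝ => (1 - τ) • a) ((-1 : ℝ) • a) 0 := by
      simpa using (((hasDerivAt_id (0:ℝ)).const_sub 1).smul_const a)
    have h2 : HasDerivAt (fun τ : ℝ => τ • b) ((1 : ℝ) • b) 0 := by
      simpa using ((hasDerivAt_id (0:ℝ)).smul_const b)
    have := h1.add h2
    convert this using 1
    · rfl
    · rw [hv]; module
  have hf : HasFDerivAt f (InnerProductSpace.toDual ℝ E g) a := hgrad
  have hca : (AffineMap.lineMap a b : ℝ →ᵃ[ℝ] E) 0 = a := by simp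
  have hd : HasDerivAt (f ∘ (AffineMap.lineMap a b : ℝ →ᵃ[ℝ] E)) (inner ℝ g v : ℝ) 0 := by
    have hf' : HasFDerivAt f (InnerProductSpace.toDual ℝ E g)
        ((AffineMap.lineMap a b : ℝ →ᵃ[ℝ] E) 0) := by rw [hca]; exact hf
    have := hf'.comp_hasDerivAt (0:ℝ) hc
    simpa [InnerProductSpace.toDual] using this
  have hslope := hφconv.le_slope_of_hasDerivWithinAt (Set.mem_univ 0) (Set.mem_univ 1)
    one_pos hd.hasDerivWithinAt
  have h1 : (AffineMap.lineMap a b : ℝ →ᵃ[ℝ] E) 1 = b := by simp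
  rw [slope_def_field] at hslope
  simp only [Function.comp_apply, hca, h1] at hslope
  have hle : (inner ℝ g v : ℝ) ≤ f b - f a := by simpa using hslope
  have hcomm : (inner ℝ (a - b) g : ℝ) = -(inner ℝ g v : ℝ) := by
    rw [real_inner_comm, hv, show a - b = -(b - a) from by abel, inner_neg_right]
  rw [hcomm]; linarith



theorem maler_strongly_convex_data_dependent_regret
    (d T : ℕ) (hd : 1 ≤ d) (hT : 2 ≤ T)
    (G D : ℝ) (hG : 0 < G) (hD : 0 < D)
    (𝒟 : Set (EuclideanSpace ℝ (Fin d))) (hconv : Convex ℝ 𝒟)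
    (hdiam : ∀ a ∈ 𝒟, ∀ b ∈ 𝒟, ‖a - b‖ ≤ D)
    (f : ℕ → EuclideanSpace ℝ (Fin d) → ℝ)
    (hfconv : ∀ t ∈ Finset.Icc 1 T, ConvexOn ℝ Set.univ (f t))
    (x : ℕ → EuclideanSpace ℝ (Fin d)) (xstar : EuclideanSpace ℝ (Fin d))
    (hx : ∀ t ∈ Finset.Icc 1 T, x t ∈ 𝒟) (hxstar : xstar ∈ 𝒟)
    (g : ℕ → EuclideanSpace ℝ (Fin d))
    (hgrad : ∀ t ∈ Finset.Icc 1 T, HasGradientAt (f t) (g t) (x t))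
    (hg : ∀ t ∈ Finset.Icc 1 T, ‖g t‖ ≤ G)
    (A V : ℝ)
    (hA : A = 2 * Real.log (Real.sqrt 3 * (Real.logb 2 T / 2 + 3)) + 1 + Real.log T)
    (hV : V = G^2 * ∑ t ∈ Finset.Icc 1 T, ‖x t - xstar‖^2)
    (η : ℕ → ℝ) (hη : ∀ i, η i = (2 : ℝ)^(-(i : ℤ)) / (5 * D * G))
    (y : ℕ → ℕ → EuclideanSpace ℝ (Fin d))
    (hy : ∀ i ≤ ⌈Real.logb 2 T / 2⌉₊, ∀ t ∈ Finset.Icc 1 T, y i t ∈ 𝒟)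
    (s : ℕ → ℕ → EuclideanSpace ℝ (Fin d) → ℝ)
    (hs : ∀ i t z, s i t z =
      -(η i) * (inner ℝ (x t - z) (g t) : ℝ) + (η i)^2 * G^2 * ‖x t - z‖^2)
    (hmeta : ∀ i ≤ ⌈Real.logb 2 T / 2⌉₊,
      (∑ t ∈ Finset.Icc 1 T, s i t (x t)) - (∑ t ∈ Finset.Icc 1 T, s i t (y i t))
        ≤ 2 * Real.log (Real.sqrt 3 * (Real.logb 2 T / 2 + 3)))
    (hexpert : ∀ i ≤ ⌈Real.logb 2 T / 2⌉₊,
      (∑ t ∈ Finset.Icc 1 T, s i t (y i t)) - (∑ t ∈ Finset.Icc 1 T, s i t xstar)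
        ≤ 1 + Real.log T) :
    (∑ t ∈ Finset.Icc 1 T, f t (x t)) - (∑ t ∈ Finset.Icc 1 T, f t xstar)
      ≤ 3 * Real.sqrt (V * A) + 10 * G * D * A := by
  classical
  set N := ⌈Real.logb 2 T / 2⌉₊ with hN
  have hT1 : (1:ℝ) ≤ (T:ℝ) := by exact_mod_cast Nat.one_le_of_lt hT
  have hTpos : (0:ℝ) < (T:ℝ) := by linarith
  have hc : (0:ℝ) < 5 * D * G := by positivity
  have hηpos : ∀ i, 0 < η i := by
    intro i; rw [hη]; positivity
  -- A ≥ 1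
  have hL0 : 0 ≤ Real.logb 2 T := Real.logb_nonneg one_lt_two hT1
  have hA1 : 1 ≤ A := by
    have h3 : (1:ℝ) ≤ Real.sqrt 3 := by
      rw [show (1:ℝ) = Real.sqrt 1 from (Real.sqrt_one).symm]
      exact Real.sqrt_le_sqrt (by norm_num)
    have harg : (1:ℝ) ≤ Real.sqrt 3 * (Real.logb 2 T / 2 + 3) := by nlinarith
    have hlog1 : 0 ≤ Real.log (Real.sqrt 3 * (Real.logb 2 T / 2 + 3)) := Real.log_nonneg harg
    have hlog2 : 0 ≤ Real.log T := Real.log_nonneg hT1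
    rw [hA]; linarith
  have hApos : 0 < A := by linarith
  -- W and V bounds
  have hW0 : 0 ≤ ∑ t ∈ Finset.Icc 1 T, ‖x t - xstar‖^2 :=
    Finset.sum_nonneg fun t _ => sq_nonneg _
  have hV0 : 0 ≤ V := by rw [hV]; positivity
  have hWD : ∑ t ∈ Finset.Icc 1 T, ‖x t - xstar‖^2 ≤ (T:ℝ) * D^2 := by
    have : ∑ t ∈ Finset.Icc 1 T, ‖x t - xstar‖^2 ≤ ∑ t ∈ Finset.Icc 1 T, D^2 :=
      Finset.sum_le_sum fun t ht => by
        have h1 := hdiam (x t) (hx t ht) xstar hxstar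
        have h2 : (0:ℝ) ≤ ‖x t - xstar‖ := norm_nonneg _
        nlinarith
    simpa [Nat.card_Icc, mul_comm] using this
  have hVT : V ≤ G^2 * D^2 * (T:ℝ) := by
    rw [hV]
    have := mul_le_mul_of_nonneg_left hWD (by positivity : (0:ℝ) ≤ G^2)
    nlinarith
  -- the linearized regret
  set R := ∑ t ∈ Finset.Icc 1 T, (inner ℝ (x t - xstar) (g t) : ℝ) with hR
  have hstep1 : (∑ t ∈ Finset.Icc 1 T, f t (x t)) - (∑ t ∈ Finset.Icc 1 T, f t xstar) ≤ R := by
    rw [← Finset.sum_sub_distrib]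
    exact Finset.sum_le_sum fun t ht => grad_ineq (hfconv t ht) (hgrad t ht)
  -- key bound for each i
  have key : ∀ i ≤ N, R ≤ A / η i + η i * V := by
    intro i hi
    have h1 := hmeta i hi
    have h2 := hexpert i hi
    have h0 : ∑ t ∈ Finset.Icc 1 T, s i t (x t) = 0 :=
      Finset.sum_eq_zero fun t ht => by simp [hs]
    have hxs : ∑ t ∈ Finset.Icc 1 T, s i t xstar
        = -(η i) * R + (η i)^2 * G^2 * ∑ t ∈ Finset.Icc 1 T, ‖x t - xstar‖^2 := by
      simp only [hs]
      rw [Finset.sum_add_distrib, ← Finset.mul_sum, ← Finset.mul_sum, hR]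
    have hVW : (η i)^2 * G^2 * (∑ t ∈ Finset.Icc 1 T, ‖x t - xstar‖^2) = (η i)^2 * V := by
      rw [hV]; ring
    have h3 : η i * R - (η i)^2 * V ≤ A := by
      rw [h0] at h1
      rw [hxs, hVW] at h2
      rw [hA]; linarith
    have hp := hηpos i
    have h4 : η i * R ≤ η i * (A / η i + η i * V) := by
      have he : η i * (A / η i + η i * V) = A + (η i)^2 * V := by field_simp
      rw [he]; linarith
    exact le_of_mul_le_mul_left h4 hp
  -- case split
  have hsqrtVA : 0 ≤ Real.sqrt (V * A) := Real.sqrt_nonneg _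
  by_cases hcase : V ≤ (5*D*G)^2 * A
  · -- use i = 0
    have k0 := key 0 (Nat.zero_le _)
    have hη0 : η 0 = 1 / (5*D*G) := by rw [hη]; norm_num
    rw [hη0] at k0
    have e1 : A / (1 / (5*D*G)) = 5*D*G*A := by rw [one_div, div_inv_eq_mul]; ring
    have e2 : (1 / (5*D*G)) * V ≤ 5*D*G*A := by
      rw [div_mul_eq_mul_div, one_mul, div_le_iff₀ hc]
      nlinarith
    rw [e1] at k0
    have : R ≤ 10*G*D*A := by linarith
    linarith
  · -- V large : pick the right i
    push_neg at hcase
    have hVpos : 0 < V := lt_trans (by positivity) hcase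
    set sA := Real.sqrt A with hsA
    set sV := Real.sqrt V with hsV
    have hsApos : 0 < sA := Real.sqrt_pos.mpr hApos
    have hsA1 : 1 ≤ sA := by
      rw [hsA, show (1:ℝ) = Real.sqrt 1 from (Real.sqrt_one).symm]
      exact Real.sqrt_le_sqrt hA1
    have hsVpos : 0 < sV := Real.sqrt_pos.mpr hVpos
    have hAsq : sA^2 = A := Real.sq_sqrt hApos.le
    have hVsq : sV^2 = V := Real.sq_sqrt hVpos.le
    -- 2^N ≥ sqrt T and sV ≤ G*D*2^N
    have hpow : (Real.sqrt T) ≤ (2:ℝ)^N := by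
      have h1 : Real.logb 2 T / 2 ≤ (N:ℝ) := Nat.le_ceil _
      have h2 : (2:ℝ) ^ (Real.logb 2 T / 2) ≤ (2:ℝ) ^ ((N:ℝ)) :=
        Real.rpow_le_rpow_of_exponent_le one_le_two h1
      have h3 : (2:ℝ) ^ (Real.logb 2 T / 2) = Real.sqrt T := by
        rw [Real.sqrt_eq_rpow, show Real.logb 2 T / 2 = Real.logb 2 T * (1/2) by ring,
          Real.rpow_mul (by norm_num), Real.rpow_logb (by norm_num) (by norm_num) hTpos]
      rw [← Real.rpow_natCast (2:ℝ) N, ← h3]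
      exact h2
    have hsVb : sV ≤ G*D*(2:ℝ)^N := by
      have h1 : V ≤ (G*D*(2:ℝ)^N)^2 := by
        have hT4 : (T:ℝ) ≤ ((2:ℝ)^N)^2 := by
          have h := mul_le_mul hpow hpow (Real.sqrt_nonneg _)
            (pow_nonneg (by norm_num : (0:ℝ) ≤ 2) N)
          rwa [Real.mul_self_sqrt hTpos.le, ← sq] at h
        nlinarith [pow_pos (by norm_num : (0:ℝ) < 2) N]
      calc sV ≤ Real.sqrt ((G*D*(2:ℝ)^N)^2) := Real.sqrt_le_sqrt h1
        _ = G*D*(2:ℝ)^N := Real.sqrt_sq (by positivity)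
    -- the predicate
    have hPN : η N ≤ sA / sV := by
      rw [hη, div_le_div_iff₀ hc hsVpos]
      have hz : (2:ℝ)^(-(N:ℤ)) = ((2:ℝ)^N)⁻¹ := by
        rw [zpow_neg, zpow_natCast]
      rw [hz]
      have hp2 : (0:ℝ) < (2:ℝ)^N := pow_pos (by norm_num) N
      have h1 : ((2:ℝ)^N)⁻¹ * sV ≤ G*D := by
        rw [inv_mul_le_iff₀ hp2]
        calc sV ≤ G*D*(2:ℝ)^N := hsVb
          _ = (2:ℝ)^N * (G*D) := by ring
      calc ((2:ℝ)^N)⁻¹ * sV ≤ G*D := h1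
        _ ≤ sA * (5*D*G) := by nlinarith
    have hP0 : ¬ (η 0 ≤ sA / sV) := by
      rw [hη]
      push_neg
      have hz : (2:ℝ)^(-(0:ℕ):ℤ) = 1 := by norm_num
      rw [hz]
      rw [div_lt_div_iff₀ hsVpos hc]
      have hcA : Real.sqrt ((5*D*G)^2 * A) = (5*D*G) * sA := by
        rw [Real.sqrt_mul (by positivity), Real.sqrt_sq hc.le]
      have := Real.sqrt_lt_sqrt (by positivity) hcase
      rw [hcA] at this
      nlinarith
    have hex : ∃ i, η i ≤ sA / sV := ⟨N, hPN⟩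
    set i := Nat.find hex with hi
    have hPi : η i ≤ sA / sV := Nat.find_spec hex
    have hiN : i ≤ N := Nat.find_le hPN
    have hi1 : 1 ≤ i := by
      rcases Nat.eq_zero_or_pos i with h | h
      · exact absurd (h ▸ hPi) hP0
      · exact h
    have hPim : ¬ (η (i-1) ≤ sA / sV) := Nat.find_min hex (by omega)
    push_neg at hPim
    have hdouble : η (i-1) = 2 * η i := by
      rw [hη, hη]
      have : (-(((i:ℕ)-1:ℕ):ℤ)) = 1 + (-(i:ℤ)) := by
        have : ((i-1:ℕ):ℤ) = (i:ℤ) - 1 := by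
          push_cast [Nat.cast_sub hi1]; ring
        rw [this]; ring
      rw [this, zpow_add₀ (by norm_num : (2:ℝ) ≠ 0)]
      norm_num; ring
    rw [hdouble] at hPim
    -- so  sA/sV < 2 η i  and  η i ≤ sA/sV
    have hRb := key i hiN
    have hq : sV * (sA / sV) = sA := by field_simp
    have h1 : A / η i ≤ 2 * (sA * sV) := by
      rw [div_le_iff₀ (hηpos i)]
      nlinarith [mul_nonneg (mul_nonneg hsApos.le hsVpos.le) (by linarith : 0 ≤ 2 * η i - sA/sV),
        hηpos i]
    have h2 : η i * V ≤ sA * sV := by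
      have := mul_le_mul_of_nonneg_right hPi hVpos.le
      calc η i * V ≤ (sA / sV) * V := this
        _ = sA * sV := by rw [← hVsq]; field_simp
    have hVA : Real.sqrt (V * A) = sV * sA := by
      rw [Real.sqrt_mul hVpos.le]
    have : R ≤ 3 * Real.sqrt (V * A) := by
      rw [hVA]; nlinarith
    nlinarith [mul_pos (mul_pos hG hD) hApos]
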